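/- arXiv:1405.5739 — 5 statements merged into one kernel-verified Lean document; each statement's English description precedes it below -/
import Mathlib

section
/- There exists ϑ₀ ∈ (0,1) such that for every ϑ ∈ (0,ϑ₀) there exist a smooth function φ : ℝ → ℝ, a real number α ∈ (1,2) and a constant c ∈ (0,1) with the following properties: (i) φ(t) ≥ 0 for all t, φ(0) = 0, φ'(0) = 0, φ''(0) = 1, lim_{t→0⁺} φ'(t)/t = 1, and φ'(t) > 0 for every t > 0 (so 0 is the unique critical point of φ in [0,∞)); (ii) the function t ↦ φ'(t)/t is strictly decreasing on (0,∞) and lim_{t→+∞} φ'(t)/t exists and is strictly less than ϑ; (iii) φ(t) = c·t^α for every t > 0 such that φ'(t)/t ∈ [ϑ, 1−ϑ]. -/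
open Set Filter

namespace ProfileAux
open Real

noncomputable def S (x : ℝ) : ℝ := x + expNegInvGlue (1 - x)

noncomputable def Sd (x : ℝ) : ℝ := 1 - expNegInvGlue (1 - x) / (1 - x) ^ 2

noncomputable def Sdd (x : ℝ) : ℝ := expNegInvGlue (1 - x) * (2 * x - 1) / (1 - x) ^ 4

noncomputable def G (β x : ℝ) : ℝ := Real.exp (-β) * S x ^ (-β - 1) * (S x - β * x * Sd x)

noncomputable def phi (β t : ℝ) : ℝ := Real.exp (-β) / 2 * t ^ 2 * S (t ^ 2) ^ (-β)

noncomputable def Q (β x : ℝ) : ℝ :=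
  2 * S x * Sd x + x * S x * Sdd x - (1 + β) * x * (Sd x) ^ 2

lemma eng_of_pos {y : ℝ} (hy : 0 < y) : expNegInvGlue y = Real.exp (-y⁻¹) := by
  simp [expNegInvGlue, hy.not_ge]

lemma S_eq_of_lt {x : ℝ} (hx : x < 1) : S x = x + Real.exp (-(1 - x)⁻¹) := by
  rw [S, eng_of_pos (by linarith)]

lemma S_eq_of_ge {x : ℝ} (hx : 1 ≤ x) : S x = x := by
  rw [S, expNegInvGlue.zero_of_nonpos (by linarith), add_zero]

lemma Sd_eq_of_ge {x : ℝ} (hx : 1 ≤ x) : Sd x = 1 := by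
  rw [Sd, expNegInvGlue.zero_of_nonpos (by linarith), zero_div, sub_zero]

lemma S_pos {x : ℝ} (hx : 0 ≤ x) : 0 < S x := by
  rcases lt_or_ge x 1 with h | h
  · exact add_pos_of_nonneg_of_pos hx (expNegInvGlue.pos_of_pos (by linarith))
  · rw [S_eq_of_ge h]; linarith

lemma S_contDiff : ContDiff ℝ (⊤ : ℕ∞) S :=
  contDiff_id.add (expNegInvGlue.contDiff.comp (contDiff_const.sub contDiff_id))

lemma exp_one_ge : (27/10 : ℝ) ≤ Real.exp 1 := by
  have := Real.exp_one_gt_d9; nlinarith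

lemma eng_le (y : ℝ) : expNegInvGlue y ≤ 11/20 * y ^ 2 := by
  rcases le_or_gt y 0 with hy | hy
  · rw [expNegInvGlue.zero_of_nonpos hy]; positivity
  · rw [eng_of_pos hy]
    set u := y⁻¹ with hu
    have hu0 : 0 < u := by positivity
    have h1 : u / 2 ≤ Real.exp (u / 2 - 1) := by
      have := Real.add_one_le_exp (u / 2 - 1); linarith
    have h2 : (u / 2) ^ 2 ≤ Real.exp (u / 2 - 1) ^ 2 :=
      pow_le_pow_left₀ (by positivity) h1 2
    have h3 : Real.exp (u / 2 - 1) ^ 2 = Real.exp (u - 2) := by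
      rw [sq, ← Real.exp_add]; ring_nf
    have hexp2 : (80/11 : ℝ) ≤ Real.exp 2 := by
      have h := exp_one_ge
      have : Real.exp 2 = Real.exp 1 * Real.exp 1 := by
        rw [← Real.exp_add]; norm_num
      nlinarith [Real.exp_pos 1]
    have h4 : 20/11 * u ^ 2 ≤ Real.exp u := by
      have h5 : Real.exp (u - 2) = Real.exp u / Real.exp 2 := by
        rw [Real.exp_sub]
      rw [h3, h5] at h2
      have h6 : (u/2)^2 * Real.exp 2 ≤ Real.exp u := by
        rw [le_div_iff₀ (Real.exp_pos 2)] at h2; linarith [h2]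
      nlinarith [sq_nonneg u, Real.exp_pos 2]
    have hI : (0:ℝ) < Real.exp u := Real.exp_pos u
    rw [Real.exp_neg]
    have h7 : (Real.exp u)⁻¹ * (20/11 * u ^ 2) ≤ 1 := by
      calc (Real.exp u)⁻¹ * (20/11 * u ^ 2) ≤ (Real.exp u)⁻¹ * Real.exp u := by
            apply mul_le_mul_of_nonneg_left h4 (by positivity)
        _ = 1 := inv_mul_cancel₀ hI.ne'
    have h8 : u ^ 2 * y ^ 2 = 1 := by
      rw [hu]; field_simp
    nlinarith [inv_pos.mpr hI, sq_nonneg y, sq_nonneg u]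

lemma eng_le4 (y : ℝ) : expNegInvGlue y ≤ 256 * y ^ 4 := by
  rcases le_or_gt y 0 with hy | hy
  · rw [expNegInvGlue.zero_of_nonpos hy]; positivity
  · rw [eng_of_pos hy]
    set u := y⁻¹ with hu
    have hu0 : 0 < u := by positivity
    have h1 : u / 4 ≤ Real.exp (u / 4) := by
      have := Real.add_one_le_exp (u / 4); linarith
    have h2 : (u / 4) ^ 4 ≤ Real.exp (u / 4) ^ 4 :=
      pow_le_pow_left₀ (by positivity) h1 4
    have h3 : Real.exp (u / 4) ^ 4 = Real.exp u := by
      rw [← Real.exp_nat_mul]; ring_nf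
    have h4 : u ^ 4 / 256 ≤ Real.exp u := by rw [h3] at h2; nlinarith
    have hI : (0:ℝ) < Real.exp u := Real.exp_pos u
    rw [Real.exp_neg]
    have h7 : (Real.exp u)⁻¹ * (u ^ 4 / 256) ≤ 1 := by
      calc (Real.exp u)⁻¹ * (u ^ 4 / 256) ≤ (Real.exp u)⁻¹ * Real.exp u := by
            apply mul_le_mul_of_nonneg_left h4 (by positivity)
        _ = 1 := inv_mul_cancel₀ hI.ne'
    have h8 : u ^ 4 * y ^ 4 = 1 := by
      rw [hu]; field_simp
    nlinarith [inv_pos.mpr hI, pow_pos hy 4, pow_pos hu0 4]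

lemma hasDerivAt_S {x : ℝ} (hx : x ≠ 1) : HasDerivAt S (Sd x) x := by
  rcases lt_or_gt_of_ne hx with h | h
  · have hy : (0:ℝ) < 1 - x := by linarith
    have hy' : (1 : ℝ) - x ≠ 0 := hy.ne'
    have h1 : HasDerivAt (fun x : ℝ => 1 - x) (-1) x := by
      simpa using (hasDerivAt_id x).const_sub 1
    have h2 : HasDerivAt (fun x : ℝ => (1 - x)⁻¹) (-(-1) / (1 - x) ^ 2) x := h1.inv hy'
    have h3 : HasDerivAt (fun x : ℝ => Real.exp (-(1 - x)⁻¹))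
        (Real.exp (-(1 - x)⁻¹) * (-(-(-1) / (1 - x) ^ 2))) x := (h2.neg).exp
    have h4 : HasDerivAt (fun x : ℝ => x + Real.exp (-(1 - x)⁻¹))
        (1 + Real.exp (-(1 - x)⁻¹) * (-(-(-1) / (1 - x) ^ 2))) x := (hasDerivAt_id x).add h3
    have hev : (fun x : ℝ => x + Real.exp (-(1 - x)⁻¹)) =ᶠ[nhds x] S := by
      filter_upwards [Iio_mem_nhds h] with y hy2
      exact (S_eq_of_lt hy2).symm
    have h5 := h4.congr_of_eventuallyEq hev.symm
    refine h5.congr_deriv (Eq.symm ?_)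
    rw [Sd, eng_of_pos hy]
    field_simp
    ring
  · have h1 : HasDerivAt (fun x : ℝ => x) 1 x := hasDerivAt_id x
    have hev : (fun x : ℝ => x) =ᶠ[nhds x] S := by
      filter_upwards [Ioi_mem_nhds h] with y hy2
      exact (S_eq_of_ge (le_of_lt hy2)).symm
    have h5 := h1.congr_of_eventuallyEq hev.symm
    rw [Sd_eq_of_ge h.le]
    exact h5

lemma hasDerivAt_Sd {x : ℝ} (hx : x < 1) : HasDerivAt Sd (Sdd x) x := by
  have hy : (0:ℝ) < 1 - x := by linarith
  have hy' : (1 : ℝ) - x ≠ 0 := hy.ne'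
  have h1 : HasDerivAt (fun x : ℝ => 1 - x) (-1) x := by
    simpa using (hasDerivAt_id x).const_sub 1
  have h2 : HasDerivAt (fun x : ℝ => (1 - x)⁻¹) (-(-1) / (1 - x) ^ 2) x := h1.inv hy'
  have h3 : HasDerivAt (fun x : ℝ => Real.exp (-(1 - x)⁻¹))
      (Real.exp (-(1 - x)⁻¹) * (-(-(-1) / (1 - x) ^ 2))) x := (h2.neg).exp
  have h6 : HasDerivAt (fun x : ℝ => (1 - x) ^ 2) (2 * (1 - x) * (-1)) x := by
    have := h1.pow 2
    refine this.congr_deriv ?_; ring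
  have h7 : HasDerivAt (fun x : ℝ => Real.exp (-(1 - x)⁻¹) / (1 - x) ^ 2)
      ((Real.exp (-(1 - x)⁻¹) * (-(-(-1) / (1 - x) ^ 2)) * (1 - x) ^ 2 -
        Real.exp (-(1 - x)⁻¹) * (2 * (1 - x) * (-1))) / ((1 - x) ^ 2) ^ 2) x :=
    h3.div h6 (pow_ne_zero 2 hy')
  have h8 : HasDerivAt (fun x : ℝ => 1 - Real.exp (-(1 - x)⁻¹) / (1 - x) ^ 2)
      (-((Real.exp (-(1 - x)⁻¹) * (-(-(-1) / (1 - x) ^ 2)) * (1 - x) ^ 2 -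
        Real.exp (-(1 - x)⁻¹) * (2 * (1 - x) * (-1))) / ((1 - x) ^ 2) ^ 2)) x := h7.const_sub 1
  have hev : (fun x : ℝ => 1 - Real.exp (-(1 - x)⁻¹) / (1 - x) ^ 2) =ᶠ[nhds x] Sd := by
    filter_upwards [Iio_mem_nhds hx] with y hy2
    rw [Sd, eng_of_pos (by simp at hy2; linarith)]
  have h9 := h8.congr_of_eventuallyEq hev.symm
  refine h9.congr_deriv (Eq.symm ?_)
  rw [Sdd, eng_of_pos hy]
  field_simp
  ring

lemma Sd_le_one (x : ℝ) : Sd x ≤ 1 := by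
  have h : 0 ≤ expNegInvGlue (1 - x) / (1 - x) ^ 2 :=
    div_nonneg (expNegInvGlue.nonneg _) (sq_nonneg _)
  rw [Sd]; linarith

lemma Sd_ge (x : ℝ) : 9/20 ≤ Sd x := by
  rcases eq_or_ne x 1 with h | h
  · subst h; norm_num [Sd, expNegInvGlue.zero]
  · have hne : (1:ℝ) - x ≠ 0 := sub_ne_zero.mpr (Ne.symm h)
    have hsq : (0:ℝ) < (1 - x) ^ 2 := by positivity
    have h2 : expNegInvGlue (1 - x) / (1 - x) ^ 2 ≤ 11/20 := by
      rw [div_le_iff₀ hsq]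
      have := eng_le (1 - x); linarith
    rw [Sd]; linarith

lemma one_sub_le_Sd (x : ℝ) : 1 - 256 * (1 - x) ^ 2 ≤ Sd x := by
  rcases eq_or_ne x 1 with h | h
  · subst h; norm_num [Sd, expNegInvGlue.zero]
  · have hne : (1:ℝ) - x ≠ 0 := sub_ne_zero.mpr (Ne.symm h)
    have hsq : (0:ℝ) < (1 - x) ^ 2 := by positivity
    have h2 : expNegInvGlue (1 - x) / (1 - x) ^ 2 ≤ 256 * (1 - x) ^ 2 := by
      rw [div_le_iff₀ hsq]
      have := eng_le4 (1 - x); nlinarith [this]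
    rw [Sd]; linarith

lemma Sd_one : Sd 1 = 1 := by norm_num [Sd, expNegInvGlue.zero]

lemma Sd_continuousAt (x : ℝ) : ContinuousAt Sd x := by
  rcases lt_trichotomy x 1 with h | h | h
  · exact (hasDerivAt_Sd h).differentiableAt.continuousAt
  · subst h
    rw [ContinuousAt, Sd_one]
    have hlow : Tendsto (fun x : ℝ => 1 - 256 * (1 - x) ^ 2) (nhds 1) (nhds 1) := by
      have hc : Continuous (fun x : ℝ => 1 - 256 * (1 - x) ^ 2) := by continuity
      have := hc.tendsto 1
      simpa using this
    exact tendsto_of_tendsto_of_tendsto_of_le_of_le hlow tendsto_const_nhds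
      one_sub_le_Sd Sd_le_one
  · have hev : (fun _ : ℝ => (1:ℝ)) =ᶠ[nhds x] Sd := by
      filter_upwards [Ioi_mem_nhds h] with y hy
      exact (Sd_eq_of_ge (le_of_lt hy)).symm
    exact continuousAt_const.congr hev

lemma S_sub_pos {β x : ℝ} (hβ0 : 0 ≤ β) (hβ : β ≤ 1/8) (hx : 0 ≤ x) :
    0 < S x - β * x * Sd x := by
  rcases lt_or_ge x 1 with h | h
  · have he : 0 < expNegInvGlue (1 - x) := expNegInvGlue.pos_of_pos (by linarith)
    have h1 : β * x * Sd x ≤ β * x := by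
      nlinarith [Sd_le_one x, mul_nonneg hβ0 hx, Sd_ge x]
    rw [S]
    nlinarith
  · rw [S_eq_of_ge h, Sd_eq_of_ge h]
    nlinarith

lemma G_pos {β x : ℝ} (hβ0 : 0 ≤ β) (hβ : β ≤ 1/8) (hx : 0 ≤ x) : 0 < G β x := by
  have h1 : 0 < S x ^ (-β - 1) := Real.rpow_pos_of_pos (S_pos hx) _
  exact mul_pos (mul_pos (Real.exp_pos _) h1) (S_sub_pos hβ0 hβ hx)

lemma G_eq_of_ge {β x : ℝ} (hx : 1 ≤ x) :
    G β x = Real.exp (-β) * (1 - β) * x ^ (-β) := by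
  have hx0 : (0:ℝ) < x := by linarith
  rw [G, S_eq_of_ge hx, Sd_eq_of_ge hx]
  have h1 : x ^ (-β - 1) = x ^ (-β) * x⁻¹ := by
    rw [show -β - 1 = -β + (-1) by ring, Real.rpow_add hx0, Real.rpow_neg_one]
  rw [h1]
  field_simp

lemma S_zero : S 0 = Real.exp (-1) := by
  rw [S, show (1:ℝ) - 0 = 1 by norm_num, eng_of_pos one_pos]; norm_num

lemma G_zero (β : ℝ) : G β 0 = 1 := by
  rw [G, S_zero]
  have h1 : Real.exp (-1) ^ (-β - 1) = Real.exp (-(-β - 1) * 1) := by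
    rw [← Real.exp_mul]; ring_nf
  rw [h1]
  simp only [mul_zero, zero_mul, sub_zero, mul_one]
  rw [← Real.exp_add, ← Real.exp_add]
  norm_num

lemma G_continuousAt {β x : ℝ} (hx : 0 ≤ x) : ContinuousAt (G β) x := by
  have hS : ContinuousAt S x := S_contDiff.continuous.continuousAt
  have h1 : ContinuousAt (fun x => S x ^ (-β - 1)) x :=
    hS.rpow_const (Or.inl (S_pos hx).ne')
  exact (continuousAt_const.mul h1).mul
    (hS.sub ((continuousAt_const.mul continuousAt_id).mul (Sd_continuousAt x)))

lemma hasDerivAt_G {β x : ℝ} (hx : x < 1) (hS : 0 < S x) :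
    HasDerivAt (G β) (-(β * Real.exp (-β)) * S x ^ (-β - 2) * Q β x) x := by
  have h1 := hasDerivAt_S (ne_of_lt hx)
  have h2 := hasDerivAt_Sd hx
  have hp : HasDerivAt (fun x => S x ^ (-β - 1)) (Sd x * (-β - 1) * S x ^ (-β - 1 - 1)) x :=
    h1.rpow_const (Or.inl hS.ne')
  have hv : HasDerivAt (fun x => S x - β * x * Sd x)
      (Sd x - (β * 1 * Sd x + β * x * Sdd x)) x :=
    h1.sub (((hasDerivAt_id x).const_mul β).mul h2)
  have h3 := (hp.const_mul (Real.exp (-β))).mul hv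
  have key : Real.exp (-β) * (Sd x * (-β - 1) * S x ^ (-β - 1 - 1)) * (S x - β * x * Sd x) +
      Real.exp (-β) * S x ^ (-β - 1) * (Sd x - (β * 1 * Sd x + β * x * Sdd x)) =
      -(β * Real.exp (-β)) * S x ^ (-β - 2) * Q β x := by
    have e1 : S x ^ (-β - 1) = S x ^ (-β - 2) * S x := by
      rw [show -β - 1 = (-β - 2) + 1 by ring, Real.rpow_add_one hS.ne']
    have e2 : S x ^ (-β - 1 - 1) = S x ^ (-β - 2) := by
      rw [show (-β - 1 - 1 : ℝ) = -β - 2 by ring]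
    rw [e1, e2, Q]
    ring
  rw [← key]
  exact h3

set_option maxHeartbeats 1000000 in
lemma Q_pos {β x : ℝ} (hβ0 : 0 ≤ β) (hβ : β ≤ 1/8) (hx0 : 0 < x) (hx1 : x < 1) :
    0 < Q β x := by
  have hy0 : (0:ℝ) < 1 - x := by linarith
  have hy2 : (0:ℝ) < (1 - x) ^ 2 := by positivity
  have hy4 : (0:ℝ) < (1 - x) ^ 4 := by positivity
  obtain ⟨e, he_def⟩ : ∃ e, e = expNegInvGlue (1 - x) := ⟨_, rfl⟩
  obtain ⟨q, hq_def⟩ : ∃ q, q = e / (1 - x) ^ 2 := ⟨_, rfl⟩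
  obtain ⟨T, hT_def⟩ : ∃ T, T = e * (2 * x - 1) / (1 - x) ^ 4 := ⟨_, rfl⟩
  have he0 : 0 < e := by rw [he_def]; exact expNegInvGlue.pos_of_pos hy0
  have he1 : e ≤ 11/20 * (1 - x) ^ 2 := by rw [he_def]; exact eng_le (1 - x)
  have he2 : e ≤ 2/5 := by
    rw [he_def, eng_of_pos hy0]
    have hyi : 0 < (1 - x)⁻¹ := inv_pos.mpr hy0
    have h1 : (1:ℝ) ≤ (1 - x)⁻¹ := by nlinarith [mul_inv_cancel₀ hy0.ne']
    have h2 : Real.exp (-(1 - x)⁻¹) ≤ Real.exp (-1) := Real.exp_le_exp.mpr (by linarith)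
    have h3 : Real.exp (-1) ≤ 2/5 := by
      rw [Real.exp_neg]
      have h4 := exp_one_ge
      have h5 := Real.exp_pos 1
      nlinarith [mul_inv_cancel₀ h5.ne', inv_pos.mpr h5]
    linarith
  have hq0 : 0 < q := by rw [hq_def]; exact div_pos he0 hy2
  have hq1 : q ≤ 11/20 := by rw [hq_def, div_le_iff₀ hy2]; linarith
  have hSx : S x = x + e := by rw [S, he_def]
  have hSdx : Sd x = 1 - q := by rw [Sd, ← he_def, hq_def]
  have hSddx : Sdd x = T := by rw [Sdd, ← he_def, hT_def]
  have hD0 : (0:ℝ) < 1 - q := by linarith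
  have hD9 : (9:ℝ)/20 ≤ 1 - q := by linarith
  have hkey0 : (0:ℝ) ≤ 9/8 - (1 + β) * (1 - q) := by nlinarith [mul_nonneg hβ0 hq0.le]
  have key1 : (1 + β) * x * (1 - q) ^ 2 ≤ 9/8 * (x * (1 - q)) := by
    nlinarith [mul_nonneg (mul_pos hx0 hD0).le hkey0]
  have hTlow : -(27/16) * e ≤ T := by
    have h27 : 16 * (2 * (1 - x) - 1) ≤ 27 * (1 - x) ^ 4 := by
      nlinarith [mul_nonneg (sq_nonneg ((1 - x) - 2/3))
        (show (0:ℝ) ≤ 27 * (1 - x) ^ 2 + 36 * (1 - x) + 36 by nlinarith [sq_nonneg ((1 - x) + 2/3)])]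
    have hs27 : (0:ℝ) ≤ (2 * x - 1) + 27/16 * (1 - x) ^ 4 := by linarith
    rw [hT_def, le_div_iff₀ hy4]
    nlinarith [mul_nonneg he0.le hs27]
  rw [Q, hSx, hSdx, hSddx]
  rcases le_or_gt (1/2) x with hx2 | hx2
  · -- Case A : x ≥ 1/2
    have hThi : 0 ≤ x * (x + e) * T := by
      rw [hT_def]
      apply mul_nonneg
      · nlinarith
      · apply div_nonneg _ hy4.le
        nlinarith
    have key2 : 2 * x * (1 - q) ≤ 2 * (x + e) * (1 - q) := by nlinarith
    have hxD : 0 < x * (1 - q) := mul_pos hx0 hD0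
    linarith
  · -- Case B : x < 1/2
    have hxe : 0 ≤ x * (x + e) := by nlinarith
    have hbad2 : -(27/16) * (x * (x + e) * e) ≤ x * (x + e) * T := by
      calc -(27/16) * (x * (x + e) * e) = x * (x + e) * (-(27/16) * e) := by ring
        _ ≤ x * (x + e) * T := mul_le_mul_of_nonneg_left hTlow hxe
    have hxe9 : x * (x + e) ≤ 9/20 := by nlinarith
    have b4 : 27/16 * (x * (x + e) * e) ≤ 243/320 * e := by
      nlinarith [mul_nonneg (sub_nonneg.mpr hxe9) he0.le]
    have harg : (0:ℝ) ≤ 7/8 * x + 2 * e := by nlinarith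
    have b3 : 9/10 * e ≤ (7/8 * x + 2 * e) * (1 - q) := by
      nlinarith [mul_nonneg harg (by linarith : (0:ℝ) ≤ (1 - q) - 9/20)]
    have b2 : 2 * (x + e) * (1 - q) = (7/8 * x + 2 * e) * (1 - q) + 9/8 * (x * (1 - q)) := by
      ring
    linarith

lemma phi_contDiff (β : ℝ) : ContDiff ℝ (⊤ : ℕ∞) (phi β) := by
  rw [contDiff_iff_contDiffAt]
  intro t
  have hsq : ContDiffAt ℝ (⊤ : ℕ∞) (fun t : ℝ => t ^ 2) t := by
    exact (contDiff_id.pow 2).contDiffAt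
  have hS : ContDiffAt ℝ (⊤ : ℕ∞) (fun t : ℝ => S (t ^ 2)) t :=
    (S_contDiff.contDiffAt).comp t hsq
  have hrp : ContDiffAt ℝ (⊤ : ℕ∞) (fun t : ℝ => S (t ^ 2) ^ (-β)) t :=
    hS.rpow_const_of_ne (S_pos (sq_nonneg t)).ne'
  exact (contDiffAt_const.mul hsq).mul hrp

lemma hasDerivAt_phi {β t : ℝ} (ht : t ^ 2 ≠ 1) :
    HasDerivAt (phi β) (t * G β (t ^ 2)) t := by
  have hsq : HasDerivAt (fun t : ℝ => t ^ 2) (2 * t) t := by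
    simpa using hasDerivAt_pow 2 t
  have hS' : HasDerivAt (S ∘ fun t : ℝ => t ^ 2) (Sd (t ^ 2) * (2 * t)) t :=
    HasDerivAt.comp t (hasDerivAt_S ht) hsq
  have hS : HasDerivAt (fun t : ℝ => S (t ^ 2)) (Sd (t ^ 2) * (2 * t)) t := hS'
  have hSpos : 0 < S (t ^ 2) := S_pos (sq_nonneg t)
  have hrp : HasDerivAt (fun t : ℝ => S (t ^ 2) ^ (-β))
      (Sd (t ^ 2) * (2 * t) * (-β) * S (t ^ 2) ^ (-β - 1)) t :=
    hS.rpow_const (Or.inl hSpos.ne')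
  have h3 := ((hasDerivAt_pow 2 t).const_mul (Real.exp (-β) / 2)).mul hrp
  have key : Real.exp (-β) / 2 * (↑2 * t ^ (2 - 1)) * S (t ^ 2) ^ (-β) +
      Real.exp (-β) / 2 * t ^ 2 * (Sd (t ^ 2) * (2 * t) * (-β) * S (t ^ 2) ^ (-β - 1)) =
      t * G β (t ^ 2) := by
    have e1 : S (t ^ 2) ^ (-β - 1) * S (t ^ 2) = S (t ^ 2) ^ (-β) := by
      rw [← Real.rpow_add_one hSpos.ne', show (-β - 1 + 1 : ℝ) = -β by ring]
    rw [← e1, G]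
    push_cast
    ring
  rw [← key]
  exact h3

lemma deriv_phi (β : ℝ) (t : ℝ) : deriv (phi β) t = t * G β (t ^ 2) := by
  by_cases h : t ^ 2 = 1
  · -- t = 1 or t = -1 : continuity argument
    have ht0 : t ≠ 0 := by intro h0; rw [h0] at h; norm_num at h
    have hc : ContinuousAt (fun s : ℝ => s * G β (s ^ 2)) t := by
      apply continuousAt_id.mul
      have h1 : ContinuousAt (G β ∘ fun s : ℝ => s ^ 2) t :=
        ContinuousAt.comp (G_continuousAt (sq_nonneg t)) ((continuous_pow 2).continuousAt)
      exact h1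
    have hd : ContinuousAt (deriv (phi β)) t :=
      ((phi_contDiff β).continuous_deriv (by exact_mod_cast le_top)).continuousAt
    have hev : ∀ᶠ s in nhdsWithin t {t}ᶜ, deriv (phi β) s = s * G β (s ^ 2) := by
      have hmem : {s : ℝ | s ≠ -t} ∈ nhdsWithin t {t}ᶜ := by
        apply mem_nhdsWithin_of_mem_nhds
        apply IsOpen.mem_nhds isOpen_ne
        intro habs
        have ht00 : t = 0 := by linarith [habs]
        exact ht0 ht00
      filter_upwards [hmem, self_mem_nhdsWithin] with s hs1 hs2
      have : s ^ 2 ≠ 1 := by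
        intro habs
        have h1 : s ^ 2 = t ^ 2 := by rw [habs, h]
        have := sq_eq_sq_iff_eq_or_eq_neg.mp h1
        rcases this with h2 | h2
        · exact hs2 h2
        · exact hs1 h2
      exact (hasDerivAt_phi this).deriv
    have l1 : Tendsto (deriv (phi β)) (nhdsWithin t {t}ᶜ) (nhds (deriv (phi β) t)) :=
      hd.continuousWithinAt.tendsto
    have l2 : Tendsto (deriv (phi β)) (nhdsWithin t {t}ᶜ) (nhds (t * G β (t ^ 2))) := by
      apply Tendsto.congr' _ (hc.continuousWithinAt.tendsto)
      filter_upwards [hev] with s hs using hs.symm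
    exact tendsto_nhds_unique l1 l2
  · exact (hasDerivAt_phi h).deriv

lemma G_strictAntiOn {β : ℝ} (hβ0 : 0 < β) (hβ : β ≤ 1/8) :
    StrictAntiOn (G β) (Ioi 0) := by
  have hIoc : StrictAntiOn (G β) (Ioc 0 1) := by
    apply strictAntiOn_of_deriv_neg (convex_Ioc 0 1)
    · intro x hx
      exact (G_continuousAt (le_of_lt hx.1)).continuousWithinAt
    · intro x hx
      rw [interior_Ioc] at hx
      rw [(hasDerivAt_G hx.2 (S_pos hx.1.le)).deriv]
      have h1 : 0 < S x ^ (-β - 2) := Real.rpow_pos_of_pos (S_pos hx.1.le) _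
      have h2 := Q_pos hβ0.le hβ hx.1 hx.2
      have h3 : 0 < β * Real.exp (-β) := mul_pos hβ0 (Real.exp_pos _)
      nlinarith [mul_pos (mul_pos h3 h1) h2]
  have hIci : ∀ x y : ℝ, 1 ≤ x → x < y → G β y < G β x := by
    intro x y hx hxy
    rw [G_eq_of_ge hx, G_eq_of_ge (by linarith : 1 ≤ y)]
    have hx0 : (0:ℝ) < x := by linarith
    have hy0 : (0:ℝ) < y := by linarith
    have h1 : y ^ (-β) < x ^ (-β) := by
      rw [Real.rpow_neg hx0.le, Real.rpow_neg hy0.le]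
      apply inv_strictAnti₀ (Real.rpow_pos_of_pos hx0 β)
      exact Real.rpow_lt_rpow hx0.le hxy hβ0
    have h2 : 0 < Real.exp (-β) * (1 - β) := by
      apply mul_pos (Real.exp_pos _); linarith
    nlinarith
  intro s hs t ht hst
  simp only [mem_Ioi] at hs ht
  rcases le_or_gt t 1 with h1 | h1
  · exact hIoc ⟨hs, by linarith⟩ ⟨ht, h1⟩ hst
  · rcases le_or_gt s 1 with h2 | h2
    · rcases eq_or_lt_of_le h2 with h3 | h3
      · rw [h3]
        exact hIci 1 t le_rfl h1
      · calc G β t < G β 1 := hIci 1 t le_rfl h1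
          _ < G β s := hIoc ⟨hs, h2⟩ ⟨one_pos, le_rfl⟩ h3
    · exact hIci s t h2.le hst

end ProfileAux

open ProfileAux

/-- Lemma 2.2: construction of the profile function `φ`. There is a threshold `ϑ₀ ∈ (0,1)`
such that for every `ϑ ∈ (0,ϑ₀)` there is a smooth `φ : ℝ → ℝ`, an exponent `α ∈ (1,2)` and a
constant `c ∈ (0,1)` with: `φ ≥ 0`, `φ(0) = φ'(0) = 0`, `φ''(0) = 1`, `φ'(t)/t → 1` as `t → 0⁺`,
`φ'(t) > 0` for `t > 0`, `t ↦ φ'(t)/t` strictly decreasing on `(0,∞)` with limit at `+∞`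
strictly below `ϑ`, and `φ(t) = c·t^α` whenever `t > 0` and `φ'(t)/t ∈ [ϑ, 1-ϑ]`. -/
theorem profile_function_exists :
    ∃ ϑ₀ : ℝ, 0 < ϑ₀ ∧ ϑ₀ < 1 ∧ ∀ ϑ : ℝ, 0 < ϑ → ϑ < ϑ₀ →
      ∃ (φ : ℝ → ℝ) (α c : ℝ),
        ContDiff ℝ (⊤ : ℕ∞) φ ∧ 1 < α ∧ α < 2 ∧ 0 < c ∧ c < 1 ∧
        (∀ t, 0 ≤ φ t) ∧ φ 0 = 0 ∧ deriv φ 0 = 0 ∧ deriv (deriv φ) 0 = 1 ∧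
        Tendsto (fun t => deriv φ t / t) (nhdsWithin 0 (Ioi 0)) (nhds 1) ∧
        (∀ t, 0 < t → 0 < deriv φ t) ∧
        StrictAntiOn (fun t => deriv φ t / t) (Ioi 0) ∧
        (∃ δ : ℝ, Tendsto (fun t => deriv φ t / t) atTop (nhds δ) ∧ δ < ϑ) ∧
        (∀ t, 0 < t → deriv φ t / t ∈ Icc ϑ (1 - ϑ) → φ t = c * t ^ α) := by
  refine ⟨1/2, by norm_num, by norm_num, fun ϑ hϑ0 hϑ => ?_⟩
  set β : ℝ := ϑ / 4 with hβdef
  have hβ0 : 0 < β := by positivity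
  have hβ8 : β ≤ 1/8 := by rw [hβdef]; linarith
  refine ⟨phi β, 2 - 2 * β, Real.exp (-β) / 2, phi_contDiff β, by linarith, by linarith,
    by positivity, ?_, ?_, ?_, ?_, ?_, ?_, ?_, ?_, ?_, ?_⟩
  · -- c < 1
    have : Real.exp (-β) ≤ 1 := Real.exp_le_one_iff.mpr (by linarith)
    linarith
  · -- 0 ≤ φ
    intro t
    have h1 : 0 < S (t ^ 2) ^ (-β) := Real.rpow_pos_of_pos (S_pos (sq_nonneg t)) _
    have h2 : (0:ℝ) ≤ t ^ 2 := sq_nonneg t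
    have h3 : 0 < Real.exp (-β) / 2 := by positivity
    rw [phi]
    positivity
  · -- φ 0 = 0
    simp [phi]
  · -- deriv φ 0 = 0
    rw [deriv_phi]; ring
  · -- second derivative at 0
    have hfun : deriv (phi β) = fun t => t * G β (t ^ 2) := funext (deriv_phi β)
    rw [hfun]
    have hG : HasDerivAt (G β)
        (-(β * Real.exp (-β)) * S ((0:ℝ) ^ 2) ^ (-β - 2) * Q β ((0:ℝ) ^ 2)) ((0:ℝ) ^ 2) :=
      hasDerivAt_G (by norm_num) (S_pos (by norm_num))
    have hsq : HasDerivAt (fun t : ℝ => t ^ 2) (2 * 0) 0 := by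
      simpa using hasDerivAt_pow 2 (0:ℝ)
    have hcomp' : HasDerivAt (G β ∘ fun t : ℝ => t ^ 2)
        (-(β * Real.exp (-β)) * S ((0:ℝ) ^ 2) ^ (-β - 2) * Q β ((0:ℝ) ^ 2) * (2 * 0)) 0 :=
      HasDerivAt.comp 0 hG hsq
    have hcomp : HasDerivAt (fun t : ℝ => G β (t ^ 2))
        (-(β * Real.exp (-β)) * S ((0:ℝ) ^ 2) ^ (-β - 2) * Q β ((0:ℝ) ^ 2) * (2 * 0)) 0 := hcomp'
    have hprod := (hasDerivAt_id (0:ℝ)).mul hcomp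
    simp only [id_eq] at hprod
    have heq : deriv (fun t : ℝ => t * G β (t ^ 2)) 0 = G β ((0:ℝ) ^ 2) := by
      rw [show (fun t : ℝ => t * G β (t ^ 2)) = (id * fun t => G β (t ^ 2)) from rfl, hprod.deriv]; ring
    rw [heq]
    norm_num [G_zero]
  · -- tendsto at 0+
    have hc : ContinuousAt (fun t : ℝ => G β (t ^ 2)) 0 := by
      have h0 : ContinuousAt (G β ∘ fun t : ℝ => t ^ 2) 0 :=
        ContinuousAt.comp (G_continuousAt (sq_nonneg 0)) ((continuous_pow 2).continuousAt)
      exact h0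
    have h1 : Tendsto (fun t : ℝ => G β (t ^ 2)) (nhdsWithin 0 (Ioi 0)) (nhds 1) := by
      have h2 : Tendsto (fun t : ℝ => G β (t ^ 2)) (nhds 0) (nhds (G β ((0:ℝ) ^ 2))) := hc
      have h3 : G β ((0:ℝ) ^ 2) = 1 := by norm_num [G_zero]
      rw [h3] at h2
      exact h2.mono_left nhdsWithin_le_nhds
    apply Tendsto.congr' _ h1
    filter_upwards [self_mem_nhdsWithin] with t ht
    rw [deriv_phi, mul_comm, mul_div_assoc, div_self (ne_of_gt ht), mul_one]
  · -- deriv φ t > 0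
    intro t ht
    rw [deriv_phi]
    exact mul_pos ht (G_pos hβ0.le hβ8 (sq_nonneg t))
  · -- strict anti
    intro s hs t ht hst
    simp only [mem_Ioi] at hs ht
    have h1 : deriv (phi β) s / s = G β (s ^ 2) := by
      rw [deriv_phi, mul_comm, mul_div_assoc, div_self hs.ne', mul_one]
    have h2 : deriv (phi β) t / t = G β (t ^ 2) := by
      rw [deriv_phi, mul_comm, mul_div_assoc, div_self ht.ne', mul_one]
    simp only [h1, h2]
    apply G_strictAntiOn hβ0 hβ8 (mem_Ioi.mpr (pow_pos hs 2)) (mem_Ioi.mpr (pow_pos ht 2))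
    exact pow_lt_pow_left₀ hst hs.le two_ne_zero
  · -- limit at infinity
    refine ⟨0, ?_, hϑ0⟩
    have h1 : Tendsto (fun t : ℝ => Real.exp (-β) * (1 - β) * (t ^ 2) ^ (-β)) atTop (nhds 0) := by
      have h2 : Tendsto (fun x : ℝ => x ^ (-β)) atTop (nhds 0) := tendsto_rpow_neg_atTop hβ0
      have h3 : Tendsto (fun t : ℝ => t ^ 2) atTop atTop := tendsto_pow_atTop two_ne_zero
      have h4 := (h2.comp h3).const_mul (Real.exp (-β) * (1 - β))
      simpa using h4
    apply Tendsto.congr' _ h1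
    filter_upwards [eventually_ge_atTop (1:ℝ)] with t ht
    have ht0 : (0:ℝ) < t := by linarith
    have hsq1 : (1:ℝ) ≤ t ^ 2 := by nlinarith
    have hform : deriv (phi β) t / t = G β (t ^ 2) := by
      rw [deriv_phi]; field_simp
    rw [hform, G_eq_of_ge hsq1]
  · -- power form on the relevant range
    intro t ht hmem
    rcases lt_or_ge t 1 with h1 | h1
    · exfalso
      have hratio : deriv (phi β) t / t = G β (t ^ 2) := by
        rw [deriv_phi, mul_comm, mul_div_assoc, div_self ht.ne', mul_one]
      have hsq : t ^ 2 < 1 := by nlinarith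
      have hGt : G β 1 < G β (t ^ 2) :=
        G_strictAntiOn hβ0 hβ8 (mem_Ioi.mpr (pow_pos ht 2)) (mem_Ioi.mpr one_pos) hsq
      have hG1 : G β 1 = Real.exp (-β) * (1 - β) := by
        rw [G_eq_of_ge le_rfl, Real.one_rpow, mul_one]
      have hexp : 1 - β ≤ Real.exp (-β) := by
        have := Real.add_one_le_exp (-β); linarith
      have hlow : 1 - ϑ < Real.exp (-β) * (1 - β) := by
        have hb : β = ϑ / 4 := hβdef
        nlinarith [hexp]
      have := hmem.2
      rw [hratio] at this
      rw [hG1] at hGt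
      linarith
    · have ht2 : (1:ℝ) ≤ t ^ 2 := by nlinarith
      rw [phi, S_eq_of_ge ht2]
      have e2 : (t:ℝ) ^ (2:ℕ) = t ^ ((2:ℕ):ℝ) := (Real.rpow_natCast t 2).symm
      have e1 : ((t:ℝ) ^ (2:ℕ)) ^ (-β) = t ^ (((2:ℕ):ℝ) * (-β)) := by
        rw [e2, ← Real.rpow_mul ht.le]
      rw [e1, e2, mul_assoc, ← Real.rpow_add ht]
      congr 1
      push_cast
      ring
end

section
/- Let j be a symmetric gauge function on ℝ^{2n}, Σ = j⁻¹(1), T > 0, a > 0, and let φ : [0,∞) → ℝ be C¹ with φ(0) = φ'(0) = 0, φ'(t) > 0 for t > 0, lim_{t→0⁺} φ'(t)/t = 1, and t ↦ φ'(t)/t strictly decreasing on (0,∞). Define H̃(x) = a·φ(j(x)) for x ∈ ℝ^{2n} (so H̃ is C¹ on ℝ^{2n} with ∇H̃(0) = 0 and C³ on ℝ^{2n}∖{0}). Then a C¹ map x : ℝ → ℝ^{2n} which is not identically zero satisfies ẋ(t) = J∇H̃(x(t)) and x(t + T/2) = −x(t) for all t ∈ ℝ if and only if there exist τ ∈ (0,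 aT), ρ > 0 with φ'(ρ)/ρ = τ/(aT), and a closed characteristic (τ, y) on Σ satisfying y(t + τ/2) = −y(t) for all t, such that x(t) = ρ·y(τ·t/T) for all t ∈ ℝ. In particular, nonzero T-antiperiodic solutions of ẋ = J∇H̃(x) are in one-to-one correspondence with symmetric closed characteristics of period τ < aT. -/
open Set Filter

noncomputable section

/-- `ℝ^{2n}`, written with index type `Fin n ⊕ Fin n`. -/
abbrev Esp (n : ℕ) := EuclideanSpace ℝ (Fin n ⊕ Fin n)

/-- The standard symplectic matrix `J = [[0, −I_n],[I_n, 0]]`. -/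
def Jmat (n : ℕ) : Matrix (Fin n ⊕ Fin n) (Fin n ⊕ Fin n) ℝ :=
  Matrix.fromBlocks 0 (-1) 1 0

/-- `J` as a continuous linear map on `ℝ^{2n}`. -/
def Jc (n : ℕ) : Esp n →L[ℝ] Esp n :=
  LinearMap.toContinuousLinearMap (Matrix.toEuclideanLin (Jmat n))

/-- A symmetric gauge function on `ℝ^{2n}`: continuous, `C³` away from the origin,
positively homogeneous of degree one, positive away from `0`, and even. -/
def IsSymGauge (n : ℕ) (j : Esp n → ℝ) : Prop :=
  Continuous j ∧ ContDiffOn ℝ 3 j {(0 : Esp n)}ᶜ ∧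
  (∀ l : ℝ, 0 ≤ l → ∀ x, j (l • x) = l * j x) ∧
  (∀ x, x ≠ 0 → 0 < j x) ∧ (∀ x, j (-x) = j x)

/-- A closed characteristic `(τ, y)` on `Σ = j⁻¹(1)`: `τ > 0`, `y` a non-constant `C¹`
solution of `ẏ = J ∇j(y)` lying on `Σ` and `τ`-periodic. -/
def IsClosedCharacteristic (n : ℕ) (j : Esp n → ℝ) (τ : ℝ) (y : ℝ → Esp n) : Prop :=
  0 < τ ∧ ContDiff ℝ 1 y ∧ (∃ s t, y s ≠ y t) ∧ (∀ t, j (y t) = 1) ∧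
  (∀ t, HasDerivAt y (Jc n (gradient j (y t))) t) ∧ (∀ t, y (t + τ) = y t)

/-! ### Auxiliary lemmas -/

lemma Jc_inl (n : ℕ) (v : Esp n) (i : Fin n) : Jc n v (Sum.inl i) = -(v (Sum.inr i)) := by
  simp [Jc, Jmat, Matrix.toEuclideanLin_apply, Matrix.mulVec, Matrix.fromBlocks,
    dotProduct, Fintype.sum_sum_type, Matrix.one_apply, Finset.sum_ite_eq]

lemma Jc_inr (n : ℕ) (v : Esp n) (i : Fin n) : Jc n v (Sum.inr i) = v (Sum.inl i) := by
  simp [Jc, Jmat, Matrix.toEuclideanLin_apply, Matrix.mulVec, Matrix.fromBlocks,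
    dotProduct, Fintype.sum_sum_type, Matrix.one_apply, Finset.sum_ite_eq]

lemma inner_Jc_self (n : ℕ) (v : Esp n) : (inner ℝ v (Jc n v) : ℝ) = 0 := by
  rw [PiLp.inner_apply]
  simp only [RCLike.inner_apply, conj_trivial, Fintype.sum_sum_type, Jc_inl, Jc_inr]
  rw [← Finset.sum_add_distrib]
  simp [mul_comm]

section Gauge

variable {n : ℕ} {j : Esp n → ℝ} {φ : ℝ → ℝ} {a : ℝ}

lemma gjzero (hj : IsSymGauge n j) : j 0 = 0 := by
  have := hj.2.2.1 0 le_rfl 0; simpa using this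

lemma gjnonneg (hj : IsSymGauge n j) (z : Esp n) : 0 ≤ j z := by
  rcases eq_or_ne z 0 with rfl | hz
  · simp [gjzero hj]
  · exact (hj.2.2.2.1 z hz).le

lemma gjdiff (hj : IsSymGauge n j) {z : Esp n} (hz : z ≠ 0) : DifferentiableAt ℝ j z := by
  have hopen : IsOpen ({(0 : Esp n)}ᶜ) := isOpen_compl_singleton
  exact (hj.2.1.contDiffAt (hopen.mem_nhds (by simpa using hz))).differentiableAt (by norm_num)

lemma gjbound (hj : IsSymGauge n j) : ∃ C : ℝ, 0 < C ∧ ∀ z, j z ≤ C * ‖z‖ := by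
  obtain ⟨C, hC⟩ := (isCompact_closedBall (0 : Esp n) 1).exists_bound_of_continuousOn
    hj.1.continuousOn
  refine ⟨max C 1, by positivity, fun z => ?_⟩
  rcases eq_or_ne z 0 with rfl | hz
  · simp [gjzero hj]
  · have hnz : (0:ℝ) < ‖z‖ := norm_pos_iff.2 hz
    have h1 : j z = ‖z‖ * j (‖z‖⁻¹ • z) := by
      rw [← hj.2.2.1 ‖z‖ hnz.le]
      rw [smul_smul, mul_inv_cancel₀ hnz.ne', one_smul]
    have h2 : ‖(‖z‖⁻¹ • z)‖ ≤ 1 := by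
      rw [norm_smul]; simp [abs_of_pos (inv_pos.2 hnz)]
      rw [inv_mul_cancel₀ hnz.ne']
    have := hC (‖z‖⁻¹ • z) (by simpa [Metric.mem_closedBall, dist_eq_norm] using h2)
    have h3 : j (‖z‖⁻¹ • z) ≤ max C 1 :=
      le_trans (le_abs_self _) (le_trans (by simpa using this) (le_max_left _ _))
    calc j z = ‖z‖ * j (‖z‖⁻¹ • z) := h1
    _ ≤ ‖z‖ * max C 1 := by nlinarith [gjnonneg hj (‖z‖⁻¹ • z)]
    _ = max C 1 * ‖z‖ := mul_comm _ _

lemma gjfderiv_smul (hj : IsSymGauge n j) {ρ : ℝ} (hρ : 0 < ρ) {z : Esp n} (hz : z ≠ 0) :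
    fderiv ℝ j (ρ • z) = fderiv ℝ j z := by
  have hρz : ρ • z ≠ 0 := smul_ne_zero hρ.ne' hz
  have hd1 : DifferentiableAt ℝ j (ρ • z) := gjdiff hj hρz
  have hd2 : DifferentiableAt ℝ j z := gjdiff hj hz
  have hsm : HasFDerivAt (fun w : Esp n => ρ • w) (ρ • ContinuousLinearMap.id ℝ (Esp n)) z := by
    exact (hasFDerivAt_id z).const_smul ρ
  have hcomp : HasFDerivAt (fun w => j (ρ • w))
      ((fderiv ℝ j (ρ • z)).comp (ρ • ContinuousLinearMap.id ℝ (Esp n))) z :=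
    hd1.hasFDerivAt.comp z hsm
  have heq : (fun w => j (ρ • w)) = fun w => ρ * j w := by
    funext w; exact hj.2.2.1 ρ hρ.le w
  have hcomp2 : HasFDerivAt (fun w => ρ * j w) (ρ • fderiv ℝ j z) z := by
    simpa [smul_eq_mul] using hd2.hasFDerivAt.const_mul ρ
  rw [heq] at hcomp
  have := hcomp.unique hcomp2
  have h2 : ρ • fderiv ℝ j (ρ • z) = ρ • fderiv ℝ j z := by
    rw [← this]; ext v; simp [mul_comm]
  exact smul_right_injective _ hρ.ne' h2

lemma gjgrad_smul (hj : IsSymGauge n j) {ρ : ℝ} (hρ : 0 < ρ) {z : Esp n} (hz : z ≠ 0) :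
    gradient j (ρ • z) = gradient j z := by
  rw [gradient, gradient, gjfderiv_smul hj hρ hz]

lemma phi_strictMono (hφC1 : ContDiffOn ℝ 1 φ (Ici 0))
    (hφpos : ∀ t, 0 < t → 0 < deriv φ t) : StrictMonoOn φ (Ici 0) := by
  apply strictMonoOn_of_deriv_pos (convex_Ici 0) (hφC1.continuousOn)
  intro t ht
  rw [interior_Ici] at ht
  exact hφpos t ht

lemma phi_hasDeriv (hφC1 : ContDiffOn ℝ 1 φ (Ici 0)) {t : ℝ} (ht : 0 < t) :
    HasDerivAt φ (deriv φ t) t := by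
  have hmem : Ici (0:ℝ) ∈ nhds t := Ici_mem_nhds ht
  exact (((hφC1.differentiableOn one_ne_zero) t (le_of_lt ht)).differentiableAt hmem).hasDerivAt

lemma phi_ratio_lt_one
    (hφlim : Tendsto (fun t => deriv φ t / t) (nhdsWithin 0 (Ioi 0)) (nhds 1))
    (hφanti : StrictAntiOn (fun t => deriv φ t / t) (Ioi 0))
    {ρ : ℝ} (hρ : 0 < ρ) : deriv φ ρ / ρ < 1 := by
  set f := fun t => deriv φ t / t with hf
  have h1 : f ρ < f (ρ/2) := hφanti (by simpa using half_pos hρ) hρ (by linarith)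
  have h2 : f (ρ/2) ≤ 1 := by
    refine ge_of_tendsto hφlim ?_
    filter_upwards [Ioo_mem_nhdsGT_of_mem (by constructor <;> [exact le_rfl; exact half_pos hρ] :
      (0:ℝ) ∈ Ico 0 (ρ/2))] with s hs
    exact (hφanti hs.1 (by simpa using half_pos hρ) hs.2).le
  linarith

lemma phi_littleO (hφC1 : ContDiffOn ℝ 1 φ (Ici 0)) (hφ0 : φ 0 = 0)
    (hφlim : Tendsto (fun t => deriv φ t / t) (nhdsWithin 0 (Ioi 0)) (nhds 1)) :
    (fun s => φ s) =o[nhdsWithin 0 (Ici 0)] (fun s => s) := by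
  have hud : UniqueDiffOn ℝ (Ici (0:ℝ)) := uniqueDiffOn_Ici 0
  have hcont : ContinuousOn (derivWithin φ (Ici 0)) (Ici 0) :=
    hφC1.continuousOn_derivWithin hud le_rfl
  have hdw : HasDerivWithinAt φ (derivWithin φ (Ici 0) 0) (Ici 0) 0 := by
    have := (hφC1.differentiableOn one_ne_zero) 0 (le_refl (0:ℝ))
    exact this.hasDerivWithinAt
  have hd0 : derivWithin φ (Ici 0) 0 = 0 := by
    have ht1 : Tendsto (derivWithin φ (Ici 0)) (nhdsWithin 0 (Ioi 0))
        (nhds (derivWithin φ (Ici 0) 0)) := by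
      have := (hcont 0 (self_mem_Ici)).tendsto
      exact this.mono_left (nhdsWithin_mono 0 Ioi_subset_Ici_self)
    have heq : ∀ᶠ t in nhdsWithin (0:ℝ) (Ioi 0), derivWithin φ (Ici 0) t = deriv φ t := by
      filter_upwards [self_mem_nhdsWithin] with t ht
      exact derivWithin_of_mem_nhds (Ici_mem_nhds ht)
    have ht2 : Tendsto (fun t => deriv φ t) (nhdsWithin 0 (Ioi 0)) (nhds 0) := by
      have : Tendsto (fun t => (deriv φ t / t) * t) (nhdsWithin 0 (Ioi 0)) (nhds (1 * 0)) := by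
        apply hφlim.mul
        exact tendsto_id.mono_left nhdsWithin_le_nhds
      simp only [one_mul] at this
      refine this.congr' ?_
      filter_upwards [self_mem_nhdsWithin] with t (ht : 0 < t)
      field_simp
    have ht1' : Tendsto (fun t => deriv φ t) (nhdsWithin 0 (Ioi 0))
        (nhds (derivWithin φ (Ici 0) 0)) := ht1.congr' heq
    exact tendsto_nhds_unique ht1' ht2
  rw [hd0] at hdw
  have := hdw.isLittleO
  simpa [hφ0] using this

lemma Htil_grad (hj : IsSymGauge n j) (hφC1 : ContDiffOn ℝ 1 φ (Ici 0))
    {z : Esp n} (hz : z ≠ 0) :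
    HasGradientAt (fun w => a * φ (j w)) ((a * deriv φ (j z)) • gradient j z) z := by
  have hjz : 0 < j z := hj.2.2.2.1 z hz
  have hdj : HasFDerivAt j (fderiv ℝ j z) z := (gjdiff hj hz).hasFDerivAt
  have hF : HasFDerivAt (fun w => φ (j w)) (deriv φ (j z) • fderiv ℝ j z) z :=
    (phi_hasDeriv hφC1 hjz).comp_hasFDerivAt z hdj
  have hF2 : HasFDerivAt (fun w => a * φ (j w)) ((a * deriv φ (j z)) • fderiv ℝ j z) z := by
    simpa [smul_smul] using hF.const_mul a
  rw [hasGradientAt_iff_hasFDerivAt]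
  have hd : (InnerProductSpace.toDual ℝ (Esp n)) ((a * deriv φ (j z)) • gradient j z)
      = (a * deriv φ (j z)) • fderiv ℝ j z := by
    rw [map_smul, gradient, LinearIsometryEquiv.apply_symm_apply]
  rw [hd]; exact hF2

lemma Htil_grad0 (hj : IsSymGauge n j) (hφC1 : ContDiffOn ℝ 1 φ (Ici 0)) (hφ0 : φ 0 = 0)
    (hφlim : Tendsto (fun t => deriv φ t / t) (nhdsWithin 0 (Ioi 0)) (nhds 1)) :
    HasGradientAt (fun w => a * φ (j w)) (0 : Esp n) 0 := by
  rw [hasGradientAt_iff_hasFDerivAt, map_zero, hasFDerivAt_iff_isLittleO_nhds_zero]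
  simp only [zero_add, gjzero hj, hφ0, mul_zero, sub_zero, ContinuousLinearMap.zero_apply]
  obtain ⟨C, hC, hCb⟩ := gjbound hj
  have htd : Tendsto j (nhds (0 : Esp n)) (nhdsWithin 0 (Ici 0)) := by
    rw [tendsto_nhdsWithin_iff]
    refine ⟨by simpa [gjzero hj] using hj.1.tendsto 0, Eventually.of_forall fun w => gjnonneg hj w⟩
  have hc : (fun w : Esp n => φ (j w)) =o[nhds 0] (fun w => j w) :=
    (phi_littleO hφC1 hφ0 hφlim).comp_tendsto htd
  have hO : (fun w : Esp n => j w) =O[nhds 0] (fun w => w) := by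
    rw [Asymptotics.isBigO_iff]
    exact ⟨C, Eventually.of_forall fun w => by
      simpa [abs_of_nonneg (gjnonneg hj w)] using hCb w⟩
  have := (hc.trans_isBigO hO).const_mul_left a
  simpa using this

end Gauge

/-- Lemma 2.3: nonzero `T`-antiperiodic solutions of `ẋ = J ∇H̃(x)`, `H̃ = a·φ∘j`, are
exactly the curves `x(t) = ρ·y(τt/T)` with `φ'(ρ)/ρ = τ/(aT)` coming from symmetric closed
characteristics `(τ, y)` on `Σ` with `τ < aT`. -/
theorem antiperiodic_solutions_correspondence (n : ℕ) (hn : 0 < n)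
    (j : Esp n → ℝ) (hj : IsSymGauge n j)
    (T a : ℝ) (hT : 0 < T) (ha : 0 < a)
    (φ : ℝ → ℝ) (hφC1 : ContDiffOn ℝ 1 φ (Ici 0))
    (hφ0 : φ 0 = 0) (hφ'0 : deriv φ 0 = 0)
    (hφpos : ∀ t, 0 < t → 0 < deriv φ t)
    (hφlim : Tendsto (fun t => deriv φ t / t) (nhdsWithin 0 (Ioi 0)) (nhds 1))
    (hφanti : StrictAntiOn (fun t => deriv φ t / t) (Ioi 0))
    (x : ℝ → Esp n) (hx : ContDiff ℝ 1 x) (hxne : ∃ t, x t ≠ 0) :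
    ((∀ t, deriv x t = Jc n (gradient (fun z => a * φ (j z)) (x t))) ∧
      (∀ t, x (t + T / 2) = -x t)) ↔
    (∃ (τ ρ : ℝ) (y : ℝ → Esp n), 0 < τ ∧ τ < a * T ∧ 0 < ρ ∧
      deriv φ ρ / ρ = τ / (a * T) ∧
      IsClosedCharacteristic n j τ y ∧ (∀ t, y (t + τ / 2) = -y t) ∧
      (∀ t, x t = ρ • y (τ * t / T))) := by
  obtain ⟨hjc, hjC3, hjhom, hjpos, hjsym⟩ := id hj
  have hane : a ≠ 0 := ha.ne'
  have hTne : T ≠ 0 := hT.ne'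
  have hgradAll : ∀ z : Esp n,
      HasGradientAt (fun w => a * φ (j w)) (gradient (fun w => a * φ (j w)) z) z := by
    intro z
    rcases eq_or_ne z 0 with rfl | hz
    · have h := Htil_grad0 (a := a) hj hφC1 hφ0 hφlim
      rwa [h.gradient]
    · have h := Htil_grad (a := a) hj hφC1 hz
      rwa [h.gradient]
  constructor
  · rintro ⟨heq, hanti⟩
    have hxD : ∀ t, HasDerivAt x (deriv x t) t := fun t =>
      ((hx.differentiable one_ne_zero) t).hasDerivAt
    -- conservation of energy
    have hE : ∀ t : ℝ, HasDerivAt (fun t => a * φ (j (x t))) 0 t := by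
      intro t
      have hg := hgradAll (x t)
      have hF := hg.hasFDerivAt
      have hcomp := hF.comp_hasDerivAt t (hxD t)
      have h0 : (InnerProductSpace.toDual ℝ (Esp n)) (gradient (fun w => a * φ (j w)) (x t))
          (deriv x t) = 0 := by
        rw [heq t, InnerProductSpace.toDual_apply_apply, inner_Jc_self]
      rw [h0] at hcomp
      exact hcomp
    have hEc : ∀ t, a * φ (j (x t)) = a * φ (j (x 0)) := fun t =>
      is_const_of_deriv_eq_zero (fun s => (hE s).differentiableAt)
        (fun s => (hE s).deriv) t 0
    have hjc' : ∀ t, j (x t) = j (x 0) := by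
      intro t
      have h1 : φ (j (x t)) = φ (j (x 0)) := mul_left_cancel₀ hane (hEc t)
      exact (phi_strictMono hφC1 hφpos).injOn (mem_Ici.mpr (gjnonneg hj _))
        (mem_Ici.mpr (gjnonneg hj _)) h1
    have hρpos : 0 < j (x 0) := by
      rcases hxne with ⟨t0, ht0⟩
      rcases (gjnonneg hj (x 0)).lt_or_eq with h | h
      · exact h
      · exfalso
        have h1 : j (x t0) = 0 := (hjc' t0).trans h.symm
        refine ht0 ?_
        by_contra hne
        exact absurd h1 (ne_of_gt (hjpos _ hne))
    set ρ := j (x 0) with hρdef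
    have hxne0 : ∀ t, x t ≠ 0 := by
      intro t h
      have h1 := hjc' t
      rw [h, gjzero hj] at h1
      exact hρpos.ne h1
    have hdφρ : 0 < deriv φ ρ := hφpos ρ hρpos
    have hflt : deriv φ ρ / ρ < 1 := phi_ratio_lt_one hφlim hφanti hρpos
    have hfpos : 0 < deriv φ ρ / ρ := div_pos hdφρ hρpos
    set τ := a * T * (deriv φ ρ / ρ) with hτdef
    have hτpos : 0 < τ := mul_pos (mul_pos ha hT) hfpos
    have hτlt : τ < a * T := by nlinarith [mul_pos ha hT]
    have hτne : τ ≠ 0 := hτpos.ne'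
    set y : ℝ → Esp n := fun t => ρ⁻¹ • x (T * t / τ) with hydef
    have hs : ∀ t : ℝ, x (T * t / τ) = ρ • y t := by
      intro t
      rw [hydef]
      show x (T * t / τ) = ρ • ρ⁻¹ • x (T * t / τ)
      rw [smul_smul, mul_inv_cancel₀ hρpos.ne', one_smul]
    have hyne : ∀ t, y t ≠ 0 := fun t h => hxne0 (T * t / τ) (by rw [hs t, h, smul_zero])
    have hjy : ∀ t, j (y t) = 1 := by
      intro t
      show j (ρ⁻¹ • x (T * t / τ)) = 1
      rw [hjhom ρ⁻¹ (inv_nonneg.2 hρpos.le), hjc', inv_mul_cancel₀ hρpos.ne']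
    have hyanti : ∀ t, y (t + τ / 2) = - y t := by
      intro t
      have harg : T * (t + τ/2) / τ = T * t / τ + T / 2 := by field_simp
      show ρ⁻¹ • x (T * (t + τ/2) / τ) = -(ρ⁻¹ • x (T * t / τ))
      rw [harg, hanti, smul_neg]
    have hyper : ∀ t, y (t + τ) = y t := by
      intro t
      have h1 : t + τ = (t + τ/2) + τ/2 := by ring
      rw [h1, hyanti, hyanti, neg_neg]
    refine ⟨τ, ρ, y, hτpos, hτlt, hρpos, ?_, ⟨hτpos, ?_, ?_, hjy, ?_, hyper⟩, hyanti, ?_⟩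
    · rw [hτdef]; field_simp
    · have hlin : ContDiff ℝ 1 (fun t : ℝ => T * t / τ) :=
        (contDiff_const.mul contDiff_id).div_const τ
      exact (hx.comp hlin).const_smul ρ⁻¹
    · refine ⟨τ/2, 0, fun h => hyne 0 ?_⟩
      have h1 : y (τ/2) = - y 0 := by simpa using hyanti 0
      rw [h1] at h
      have h2 : (2 : ℝ) • y 0 = 0 := by
        rw [two_smul]; nth_rewrite 1 [← h]; simp
      simpa using (smul_eq_zero.mp h2).resolve_left (by norm_num)
    · intro t
      have hu : HasDerivAt (fun u : ℝ => T * u / τ) (T/τ) t := by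
        simpa using ((hasDerivAt_id t).const_mul T).div_const τ
      have h1 : HasDerivAt (fun u => x (T * u / τ)) ((T/τ) • deriv x (T * t / τ)) t :=
        HasDerivAt.scomp_of_eq t (hxD (T * t / τ)) hu rfl
      have h2 : HasDerivAt y (ρ⁻¹ • (T/τ) • deriv x (T * t / τ)) t := h1.const_smul ρ⁻¹
      have h3 : gradient (fun w => a * φ (j w)) (x (T * t / τ))
          = (a * deriv φ ρ) • gradient j (x (T * t / τ)) := by
        have hh := (Htil_grad (a := a) hj hφC1 (hxne0 (T * t / τ))).gradient
        rw [hh, hjc' (T * t / τ)]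
      have h4 : gradient j (x (T * t / τ)) = gradient j (y t) := by
        rw [hs t]
        exact gjgrad_smul hj hρpos (hyne t)
      have h5 : deriv x (T * t / τ) = (a * deriv φ ρ) • Jc n (gradient j (y t)) := by
        rw [heq (T * t / τ), h3, h4, map_smul]
      rw [h5] at h2
      have h7 : ρ⁻¹ • (T/τ) • (a * deriv φ ρ) • Jc n (gradient j (y t))
          = Jc n (gradient j (y t)) := by
        have hsc : ρ⁻¹ * (T / τ) * (a * deriv φ ρ) = 1 := by
          rw [hτdef]; field_simp
        rw [smul_smul, smul_smul, hsc, one_smul]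
      rwa [h7] at h2
    · intro t
      have harg : T * (τ * t / T) / τ = t := by field_simp
      rw [← hs (τ * t / T), harg]
  · rintro ⟨τ, ρ, y, hτpos, hτlt, hρpos, hratio, ⟨_, hyC1, _, hyS, hyD, hyper⟩, hyanti, hxy⟩
    have hτne : τ ≠ 0 := hτpos.ne'
    have hyne : ∀ t, y t ≠ 0 := by
      intro t h
      have := hyS t
      rw [h, gjzero hj] at this
      norm_num at this
    constructor
    · intro t
      have hu : HasDerivAt (fun u : ℝ => τ * u / T) (τ/T) t := by
        simpa using ((hasDerivAt_id t).const_mul τ).div_const T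
      have h1 : HasDerivAt (fun u => y (τ * u / T)) ((τ/T) • Jc n (gradient j (y (τ * t / T)))) t :=
        HasDerivAt.scomp_of_eq t (hyD (τ * t / T)) hu rfl
      have h2 : HasDerivAt (fun u => ρ • y (τ * u / T))
          (ρ • (τ/T) • Jc n (gradient j (y (τ * t / T)))) t := h1.const_smul ρ
      have hxfun : x = fun u => ρ • y (τ * u / T) := funext hxy
      have h2' : HasDerivAt x (ρ • (τ/T) • Jc n (gradient j (y (τ * t / T)))) t := by
        rw [hxfun]; exact h2
      rw [h2'.deriv]
      have hxt : x t = ρ • y (τ * t / T) := hxy t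
      have hxtne : x t ≠ 0 := by rw [hxt]; exact smul_ne_zero hρpos.ne' (hyne _)
      have hjxt : j (x t) = ρ := by rw [hxt, hjhom ρ hρpos.le, hyS, mul_one]
      have h3 := (Htil_grad (a := a) hj hφC1 hxtne).gradient
      rw [h3, hjxt]
      have h4 : gradient j (x t) = gradient j (y (τ * t / T)) := by
        rw [hxt]; exact gjgrad_smul hj hρpos (hyne _)
      rw [h4, map_smul, smul_smul]
      congr 1
      have hr : deriv φ ρ * (a * T) = τ * ρ := by
        field_simp at hratio
        linarith [hratio]
      field_simp
      nlinarith [hr]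
    · intro t
      rw [hxy, hxy]
      have harg : τ * (t + T/2) / T = τ * t / T + τ/2 := by field_simp
      rw [harg, hyanti, smul_neg]

end
end

section
/- Let T > 0, K ∈ ℝ, and suppose KT/(2π) is not an odd integer. If x : ℝ → ℝ^{2n} is differentiable and satisfies −J·ẋ(t) + K·x(t) = 0 and x(t + T/2) = −x(t) for all t ∈ ℝ, then x(t) = 0 for all t. -/
open Set Filter

noncomputable section

open RealInnerProductSpace

theorem Jmat_eq_J (n : ℕ) : Jmat n = Matrix.J (Fin n) ℝ := rfl

theorem Jmat_sq (n : ℕ) : Jmat n * Jmat n = -1 := by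
  rw [Jmat_eq_J]; exact Matrix.J_squared (Fin n) ℝ

theorem Jmat_transpose (n : ℕ) : (Jmat n).transpose = -(Jmat n) := by
  rw [Jmat_eq_J]; exact Matrix.J_transpose (Fin n) ℝ

theorem Jc_Jc (n : ℕ) (v : Esp n) : Jc n (Jc n v) = -v := by
  apply (WithLp.equiv 2 _).injective
  simp [Jc, Matrix.toEuclideanLin_apply, Matrix.mulVec_mulVec, Jmat_sq, Matrix.neg_mulVec,
    Matrix.one_mulVec]

theorem Jc_skew (n : ℕ) (v w : Esp n) : ⟪Jc n v, w⟫ = -⟪v, Jc n w⟫ := by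
  rw [EuclideanSpace.inner_eq_star_dotProduct, EuclideanSpace.inner_eq_star_dotProduct]
  simp only [star_trivial, Jc, LinearMap.coe_toContinuousLinearMap',
    Matrix.ofLp_toEuclideanLin_apply]
  rw [Matrix.dotProduct_mulVec, ← Matrix.mulVec_transpose,
    Jmat_transpose, Matrix.neg_mulVec, neg_dotProduct, dotProduct_comm]

theorem Jc_self (n : ℕ) (v : Esp n) : ⟪Jc n v, v⟫ = 0 := by
  have h := Jc_skew n v v
  have h2 : ⟪v, Jc n v⟫ = ⟪Jc n v, v⟫ := real_inner_comm _ _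
  linarith

/-- Kernel computation underlying Lemma 2.5: if `KT/(2π)` is not an odd integer, then the
only `T`-antiperiodic solution of `−Jẋ + Kx = 0` is `x ≡ 0`. -/
theorem antiperiodic_kernel_trivial (n : ℕ) (T K : ℝ) (hT : 0 < T)
    (hK : ∀ k : ℤ, Odd k → K * T / (2 * Real.pi) ≠ (k : ℝ))
    (x : ℝ → Esp n) (hx : Differentiable ℝ x)
    (heq : ∀ t, -(Jc n (deriv x t)) + K • x t = 0)
    (hanti : ∀ t, x (t + T / 2) = -x t) :
    ∀ t, x t = 0 := by
  have hd : ∀ t, HasDerivAt x (-(K • (Jc n (x t)))) t := by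
    intro t
    have h1 : Jc n (deriv x t) = K • x t := by
      have h := heq t
      rw [neg_add_eq_zero] at h
      exact h
    have h2 : Jc n (Jc n (deriv x t)) = K • Jc n (x t) := by
      rw [h1, map_smul]
    rw [Jc_Jc] at h2
    have h3 : deriv x t = -(K • Jc n (x t)) := by
      rw [← h2, neg_neg]
    exact h3 ▸ (hx t).hasDerivAt
  set x0 := x 0 with hx0def
  have hNd : ∀ t, HasDerivAt (fun t => ⟪x t, x t⟫) 0 t := by
    intro t
    have h := (hd t).inner ℝ (hd t)
    have e1 : ⟪x t, Jc n (x t)⟫ = 0 := by rw [real_inner_comm]; exact Jc_self n (x t)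
    rw [inner_neg_right, inner_neg_left, real_inner_smul_right, real_inner_smul_left,
      e1, Jc_self] at h
    simpa using h
  have hNconst : ∀ t, ⟪x t, x t⟫ = ⟪x0, x0⟫ := fun t =>
    is_const_of_deriv_eq_zero (fun s => (hNd s).differentiableAt) (fun s => (hNd s).deriv) t 0
  set w : ℝ → ℝ := fun t => ⟪x t, x0⟫ with hwdef
  set z : ℝ → ℝ := fun t => ⟪Jc n (x t), x0⟫ with hzdef
  have hwd : ∀ t, HasDerivAt w (-(K * z t)) t := by
    intro t
    have h := (hd t).inner ℝ (hasDerivAt_const t x0)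
    rw [inner_zero_right, inner_neg_left, real_inner_smul_left, zero_add] at h
    exact h
  have hzd : ∀ t, HasDerivAt z (K * w t) t := by
    intro t
    have hJx : HasDerivAt (fun t => Jc n (x t)) (Jc n (-(K • Jc n (x t)))) t :=
      (Jc n).hasFDerivAt.comp_hasDerivAt t (hd t)
    have h := hJx.inner ℝ (hasDerivAt_const t x0)
    rw [inner_zero_right, zero_add, map_neg, map_smul, Jc_Jc, inner_neg_left,
      real_inner_smul_left, inner_neg_left, mul_neg, neg_neg] at h
    exact h
  set ζ : ℝ → ℂ := fun t => (w t : ℂ) + (z t : ℂ) * Complex.I with hζdef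
  have hζd : ∀ t, HasDerivAt ζ ((K : ℂ) * Complex.I * ζ t) t := by
    intro t
    have h := ((hwd t).ofReal_comp).add (((hzd t).ofReal_comp).mul_const Complex.I)
    have hval : ((-(K * z t) : ℝ) : ℂ) + ((K * w t : ℝ) : ℂ) * Complex.I
        = (K : ℂ) * Complex.I * ζ t := by
      simp only [hζdef, Complex.ext_iff, Complex.add_re, Complex.add_im, Complex.mul_re,
        Complex.mul_im, Complex.I_re, Complex.I_im, Complex.ofReal_re, Complex.ofReal_im,
        Complex.neg_re, Complex.neg_im, Complex.ofReal_neg, Complex.ofReal_mul]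
      constructor <;> ring
    rw [hval] at h
    exact h
  set g : ℝ → ℂ := fun t => Complex.exp (-((K : ℂ) * Complex.I * t)) * ζ t with hgdef
  have hgd : ∀ t, HasDerivAt g 0 t := by
    intro t
    have h1 : HasDerivAt (fun t : ℝ => -((K : ℂ) * Complex.I * (t : ℂ)))
        (-((K : ℂ) * Complex.I)) t := by
      have h0 := (Complex.ofRealCLM.hasDerivAt (x := t)).const_mul ((K : ℂ) * Complex.I)
      simpa only [Complex.ofRealCLM_apply, Complex.ofReal_one, mul_one, Pi.neg_def] using h0.neg
    have h := (h1.cexp).mul (hζd t)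
    refine HasDerivAt.congr_deriv h ?_
    ring
  have hgconst : g (T / 2) = g 0 :=
    is_const_of_deriv_eq_zero (fun s => (hgd s).differentiableAt) (fun s => (hgd s).deriv) _ _
  have hz0 : z 0 = 0 := Jc_self n x0
  have hxT : x (T / 2) = -x0 := by simpa using hanti 0
  have hwT : w (T / 2) = -(w 0) := by
    simp only [hwdef]
    rw [hxT, inner_neg_left]
  have hg0 : g 0 = (w 0 : ℂ) := by
    simp [hgdef, hζdef, hz0]
  have h2 : ζ (T / 2) = Complex.exp ((K : ℂ) * Complex.I * ((T / 2 : ℝ) : ℂ)) * (w 0 : ℂ) := by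
    have h := hgconst.trans hg0
    simp only [hgdef] at h
    calc ζ (T / 2)
        = Complex.exp ((K : ℂ) * Complex.I * ((T / 2 : ℝ) : ℂ)) *
            (Complex.exp (-((K : ℂ) * Complex.I * ((T / 2 : ℝ) : ℂ))) * ζ (T / 2)) := by
          rw [← mul_assoc, ← Complex.exp_add, add_neg_cancel, Complex.exp_zero, one_mul]
      _ = _ := by rw [h]
  have hre : Real.cos (K * (T / 2)) * w 0 = -(w 0) := by
    have hc : (K : ℂ) * Complex.I * ((T / 2 : ℝ) : ℂ) = ((K * (T / 2) : ℝ) : ℂ) * Complex.I := by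
      push_cast; ring
    have h := congrArg Complex.re h2
    rw [hc] at h
    simp only [hζdef, Complex.add_re, Complex.mul_re, Complex.ofReal_re, Complex.ofReal_im,
      Complex.I_re, Complex.I_im, Complex.exp_ofReal_mul_I_re, mul_zero, zero_mul, sub_zero,
      add_zero, zero_sub, mul_one] at h
    rw [hwT] at h
    linarith
  have hfac : (Real.cos (K * (T / 2)) + 1) * w 0 = 0 := by linarith
  rcases mul_eq_zero.1 hfac with hcos | hw0
  · exfalso
    have hc : Real.cos (K * (T / 2)) = -1 := by linarith
    have h1 : Real.cos (K * (T / 2) + Real.pi) = 1 := by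
      rw [Real.cos_add_pi, hc]; ring
    obtain ⟨m, hm⟩ := (Real.cos_eq_one_iff _).1 h1
    refine hK (2 * m - 1) ⟨m - 1, by ring⟩ ?_
    rw [div_eq_iff (by positivity : (2 * Real.pi) ≠ 0)]
    push_cast
    linear_combination (-2 : ℝ) * hm
  · intro t
    have h0 : x0 = 0 := inner_self_eq_zero.1 hw0
    have h := hNconst t
    rw [h0] at h
    simp only [inner_zero_left] at h
    exact inner_self_eq_zero.1 h

end
end

section
/- Let m, u : ℤ → ℝ be functions with u(i) ≥ 0 for all i ∈ ℤ, and suppose that for every i ∈ ℤ one has m(i) − e(i) = u(i) + u(i − 1), where e(i) = 1 if i ≥ 0 and i is even, and e(i) = 0 otherwise. If p is a negative integer such that m(q) = 0 for all integers q < p, then m(p + 1) ≥ m(p). -/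
/-- Coefficient-wise form of `M(t) − 1/(1−t²) = (1+t)U(t)` (equations (5.14)/(4.18)) and
the resulting inequality (5.15): if `m(i) − e(i) = u(i) + u(i−1)` with `u ≥ 0`, where
`e(i) = 1` for `i ≥ 0` even and `e(i) = 0` otherwise, and `m` vanishes below a negative
integer `p`, then `m(p+1) ≥ m(p)`. -/
theorem morse_series_coefficient_inequality (m u : ℤ → ℝ)
    (hu : ∀ i : ℤ, 0 ≤ u i)
    (h : ∀ i : ℤ, m i - (if 0 ≤ i ∧ i % 2 = 0 then (1 : ℝ) else 0) = u i + u (i - 1))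
    (p : ℤ) (hp : p < 0) (hm : ∀ q : ℤ, q < p → m q = 0) :
    m p ≤ m (p + 1) := by
  have h1 := h (p - 1)
  have h2 := h p
  have h3 := h (p + 1)
  have hmp1 : m (p - 1) = 0 := hm _ (by omega)
  have e1 : ¬ (0 ≤ p - 1 ∧ (p - 1) % 2 = 0) := by omega
  have e2 : ¬ (0 ≤ p ∧ p % 2 = 0) := by omega
  rw [if_neg e1] at h1
  rw [if_neg e2] at h2
  have hup1 : u (p - 1) = 0 := by
    have := hu (p - 1); have := hu (p - 1 - 1); linarith
  have hmp : m p = u p := by linarith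
  have hup : u (p + 1 - 1) = u p := by norm_num
  split_ifs at h3 with he
  · have := hu (p + 1); linarith [hu p]
  · have := hu (p + 1); linarith [hu p]
end

section
/- Let α be a nonzero real number, d ≥ 0, K̄ a positive integer, m a nonnegative integer, and let i : ℕ → ℝ satisfy |i(p) − p·α| ≤ d for all p ≥ 1. Then for every h ∈ ℝ the set {s ∈ ℕ∪{0} : i(s·K̄ + m) = h} (where s·K̄ + m ≥ 1) is finite, with cardinality at most 2d/(K̄·|α|) + 2. -/
/-- Abstract counting estimate behind inequality (4.12): if `|i(p) − p·α| ≤ d` for all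
`p ≥ 1` with `α ≠ 0`, then for every `h` the set of `s ∈ ℕ∪{0}` with `s·K̄ + m ≥ 1` and
`i(s·K̄ + m) = h` is finite, of cardinality at most `2d/(K̄|α|) + 2`. -/
theorem index_level_set_count (α : ℝ) (hα : α ≠ 0) (d : ℝ) (hd : 0 ≤ d)
    (Kbar : ℕ) (hK : 0 < Kbar) (m : ℕ)
    (i : ℕ → ℝ) (hi : ∀ p : ℕ, 1 ≤ p → |i p - (p : ℝ) * α| ≤ d) :
    ∀ h : ℝ,
      {s : ℕ | 1 ≤ s * Kbar + m ∧ i (s * Kbar + m) = h}.Finite ∧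
      ({s : ℕ | 1 ≤ s * Kbar + m ∧ i (s * Kbar + m) = h}.ncard : ℝ)
        ≤ 2 * d / ((Kbar : ℝ) * |α|) + 2 := by
  intro h
  set S : Set ℕ := {s : ℕ | 1 ≤ s * Kbar + m ∧ i (s * Kbar + m) = h} with hS
  have hc : (0:ℝ) < (Kbar : ℝ) * |α| := by
    apply mul_pos
    · exact_mod_cast hK
    · exact abs_pos.mpr hα
  have hdc : (0:ℝ) ≤ 2 * d / ((Kbar : ℝ) * |α|) := by positivity
  by_cases hne : S.Nonempty
  · -- minimal element
    let s₀ := sInf S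
    have hs₀ : s₀ ∈ S := Nat.sInf_mem hne
    set N : ℕ := ⌊2 * d / ((Kbar : ℝ) * |α|)⌋₊ with hN
    have hsub : S ⊆ Set.Icc s₀ (s₀ + N) := by
      intro s hs
      have hle : s₀ ≤ s := Nat.sInf_le hs
      refine ⟨hle, ?_⟩
      have key : ((s - s₀ : ℕ) : ℝ) * ((Kbar : ℝ) * |α|) ≤ 2 * d := by
        have h1 := hi (s * Kbar + m) hs.1
        have h2 := hi (s₀ * Kbar + m) hs₀.1
        have e1 : i (s * Kbar + m) = h := hs.2
        have e2 : i (s₀ * Kbar + m) = h := hs₀.2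
        have habs : |((s * Kbar + m : ℕ) : ℝ) * α - ((s₀ * Kbar + m : ℕ) : ℝ) * α| ≤ 2 * d := by
          calc |((s * Kbar + m : ℕ) : ℝ) * α - ((s₀ * Kbar + m : ℕ) : ℝ) * α|
              = |(h - ((s₀ * Kbar + m : ℕ) : ℝ) * α) - (h - ((s * Kbar + m : ℕ) : ℝ) * α)| := by
                ring_nf
            _ ≤ |h - ((s₀ * Kbar + m : ℕ) : ℝ) * α| + |h - ((s * Kbar + m : ℕ) : ℝ) * α| := abs_sub _ _
            _ ≤ d + d := add_le_add (e2 ▸ h2) (e1 ▸ h1)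
            _ = 2 * d := by ring
        have hcast : ((s * Kbar + m : ℕ) : ℝ) * α - ((s₀ * Kbar + m : ℕ) : ℝ) * α
            = ((s - s₀ : ℕ) : ℝ) * (Kbar : ℝ) * α := by
          push_cast [Nat.cast_sub hle]
          ring
        rw [hcast] at habs
        rw [abs_mul] at habs
        have : |((s - s₀ : ℕ) : ℝ) * (Kbar : ℝ)| = ((s - s₀ : ℕ) : ℝ) * (Kbar : ℝ) := by
          apply abs_of_nonneg; positivity
        rw [this] at habs
        linarith [habs]
      have : ((s - s₀ : ℕ) : ℝ) ≤ 2 * d / ((Kbar : ℝ) * |α|) :=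
        (le_div_iff₀ hc).mpr key
      have hsn : s - s₀ ≤ N := Nat.le_floor this
      omega
    have hfin : S.Finite := (Set.finite_Icc s₀ (s₀ + N)).subset hsub
    refine ⟨hfin, ?_⟩
    have hcard : S.ncard ≤ (Set.Icc s₀ (s₀ + N)).ncard :=
      Set.ncard_le_ncard hsub (Set.finite_Icc _ _)
    have hIcc : (Set.Icc s₀ (s₀ + N)).ncard = N + 1 := by
      rw [← Nat.card_coe_set_eq, Nat.card_eq_card_toFinset]
      simp [Set.toFinset_Icc, Nat.card_Icc]
      omega
    have hNle : (N : ℝ) ≤ 2 * d / ((Kbar : ℝ) * |α|) := Nat.floor_le hdc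
    have : (S.ncard : ℝ) ≤ (N : ℝ) + 1 := by
      rw [hIcc] at hcard
      exact_mod_cast hcard
    linarith
  · rw [Set.not_nonempty_iff_eq_empty] at hne
    rw [hne]
    simp [hdc]
    linarith
end
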